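/- Let l ∈ M_n(ℝ) and N ≥ 2. Let g : (ℝ^n)^(N−1) → ℝ^n be differentiable, and define f : (ℝ^n)^N → ℝ^n by f(X_1,…,X_N) = g(X_2 − X_1, …, X_N − X_1). Then f satisfies the joint equivariance equation for l if and only if for every Z = (Z_2,…,Z_N) ∈ (ℝ^n)^(N−1) the Fréchet derivative of g at Z evaluated at (l·Z_2, …, l·Z_N) equals l·g(Z). -/

import Mathlib

noncomputable def stmt8Phi (n M : ℕ) :
    (Fin (M + 1) → Fin n → ℝ) →L[ℝ] (Fin M → Fin n → ℝ) :=
  LinearMap.toContinuousLinearMap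
    { toFun := fun X => fun i : Fin M => X i.succ - X 0
      map_add' := by intro x y; funext i; simp [Pi.add_apply]; abel
      map_smul' := by intro c x; funext i; simp [Pi.smul_apply, smul_sub] }

/-- Let `N = M + 1 ≥ 2` agents, `l ∈ M_n(ℝ)`, `g` differentiable on
`(ℝ^n)^(N−1)` and `f(X_1,…,X_N) := g(X_2 − X_1, …, X_N − X_1)`. Then `f` satisfies
the joint equivariance equation for `l` if and only if `g` does:
`Dg(Z)(l·Z_2,…,l·Z_N) = l·g(Z)` for all `Z`. -/
theorem stmt_8 (n M : ℕ) (hM : 1 ≤ M)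
    (l : Matrix (Fin n) (Fin n) ℝ)
    (g : (Fin M → Fin n → ℝ) → (Fin n → ℝ))
    (hg : Differentiable ℝ g)
    (f : (Fin (M + 1) → Fin n → ℝ) → (Fin n → ℝ))
    (hf : ∀ X : Fin (M + 1) → Fin n → ℝ, f X = g (fun i : Fin M => X i.succ - X 0)) :
    (∀ X : Fin (M + 1) → Fin n → ℝ,
        fderiv ℝ f X (fun i => l.mulVec (X i)) = l.mulVec (f X)) ↔
      (∀ Z : Fin M → Fin n → ℝ,
        fderiv ℝ g Z (fun i => l.mulVec (Z i)) = l.mulVec (g Z)) := by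
  set φ := stmt8Phi n M with hφdef
  have hφ : ∀ X : Fin (M + 1) → Fin n → ℝ, φ X = fun i : Fin M => X i.succ - X 0 := by
    intro X; rfl
  have hfc : f = g ∘ φ := by
    funext X; simp [hf X, hφ, Function.comp]
  have hder : ∀ X : Fin (M + 1) → Fin n → ℝ,
      fderiv ℝ f X = (fderiv ℝ g (φ X)).comp (φ : _ →L[ℝ] _) := by
    intro X
    rw [hfc, fderiv_comp (x := X) (hg _) φ.differentiableAt, φ.fderiv]
  constructor
  · intro h Z
    set X : Fin (M + 1) → Fin n → ℝ := Fin.cons 0 Z with hX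
    have hφX : φ X = Z := by
      funext i; simp [hφ, hX, Fin.cons_succ, Fin.cons_zero]
    have hfX : f X = g Z := by rw [hf, ← hφ, hφX]
    have := h X
    rw [hder X, hfX, hφX] at this
    have key : φ (fun i => l.mulVec (X i)) = fun i => l.mulVec (Z i) := by
      rw [hφ]
      funext i
      simp [hX, Fin.cons_succ, Fin.cons_zero]
    rw [← key]
    simpa [ContinuousLinearMap.comp_apply] using this
  · intro h X
    rw [hder X]
    have key : φ (fun i => l.mulVec (X i)) = fun i => l.mulVec (φ X i) := by
      rw [hφ]
      funext i
      simp [hφ, Matrix.mulVec_sub]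
    simp only [ContinuousLinearMap.coe_comp', Function.comp_apply, key]
    rw [h (φ X), hf X, ← hφ]
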